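/- For the static equilibrium of a Bingham fluid on an inclined plane with bottom H(x) = cos(πx) on [0,L], L = 10, h₀ = 3, the rigidity condition sup over x ∈ [0,L] of (ρ g sin α/√2)·|h₀(x − L/2) − sin(πx)/π + sin(πL)/π| / (h₀ − cos(πx)) is attained and equals ρ g sin(α) h₀ L / (2√2 (h₀ − 1)); with ρ = 1, g = 9.81, α = π/18 this value is approximately 9.0341. -/

import Mathlib

open Real

/-- The rigidity bound function φ for the parallel-free-surface test problem,
with bottom H(x) = cos(πx), h₀ = 3, L = 10. -/
noncomputable def phiRigidity (ρ g α : ℝ) (x : ℝ) : ℝ :=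
  (ρ * g * Real.sin α / Real.sqrt 2) *
    |3 * (x - 10 / 2) - (Real.sin (π * x) - Real.sin (π * 10)) / π| /
    (3 - Real.cos (π * x))

lemma sin_pi_ten : Real.sin (π * 10) = 0 := by
  have := Real.sin_nat_mul_pi 10
  simpa [mul_comm] using this

lemma cos_pi_ten : Real.cos (π * 10) = 1 := by
  have h : π * 10 = (5 : ℕ) * (2 * π) := by push_cast; ring
  rw [h, Real.cos_nat_mul_two_pi]

lemma key_ineq (x : ℝ) (hx0 : 0 ≤ x) (hx1 : x ≤ 10) :
    |3 * (x - 10 / 2) - (Real.sin (π * x) - Real.sin (π * 10)) / π| ≤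
      15 / 2 * (3 - Real.cos (π * x)) := by
  have hπ : (0 : ℝ) < π := Real.pi_pos
  have hcos : Real.cos (π * x) ≤ 1 := Real.cos_le_one _
  have hs1 : Real.sin (π * x) ≤ π * x := Real.sin_le (by positivity)
  have hs2 : Real.sin (π * (10 - x)) ≤ π * (10 - x) :=
    Real.sin_le (by nlinarith)
  have hsub : Real.sin (π * (10 - x)) = -Real.sin (π * x) := by
    have h : π * (10 - x) = π * 10 - π * x := by ring
    rw [h, Real.sin_sub, sin_pi_ten, cos_pi_ten]
    ring
  rw [hsub] at hs2
  rw [sin_pi_ten, sub_zero]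
  have hd1 : Real.sin (π * x) / π ≤ x := by
    rw [div_le_iff₀ hπ]; nlinarith
  have hd2 : -(Real.sin (π * x) / π) ≤ 10 - x := by
    rw [neg_div', div_le_iff₀ hπ]; nlinarith
  rw [abs_le]
  constructor <;> linarith

lemma sqrt_two_bounds : 1.414213 < Real.sqrt 2 ∧ Real.sqrt 2 < 1.414214 := by
  have h : Real.sqrt 2 ^ 2 = 2 := Real.sq_sqrt (by norm_num)
  have hpos : 0 < Real.sqrt 2 := Real.sqrt_pos.mpr (by norm_num)
  constructor <;> nlinarith

lemma sin_pi_div_18_bounds :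
    0.173646 < Real.sin (π / 18) ∧ Real.sin (π / 18) < 0.173649 := by
  set s := Real.sin (π / 18) with hs
  have h3 : Real.sin (3 * (π / 18)) = 3 * s - 4 * s ^ 3 := Real.sin_three_mul _
  have h6 : (3 : ℝ) * (π / 18) = π / 6 := by ring
  rw [h6, Real.sin_pi_div_six] at h3
  have hπ : (0 : ℝ) < π := Real.pi_pos
  have hπlt : π < 3.15 := by
    have := Real.pi_lt_d2; linarith
  have hspos : 0 < s := Real.sin_pos_of_pos_of_lt_pi (by positivity)
    (by nlinarith [Real.pi_gt_three])
  have hsmall : s < 0.2 := by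
    have hlt : Real.sin (π / 18) < π / 18 := Real.sin_lt (by positivity)
    have : π / 18 < 0.2 := by nlinarith
    linarith
  constructor <;> nlinarith [sq_nonneg s, sq_nonneg (s - 0.1736)]

theorem rigidity_condition_value (ρ g α : ℝ) (hρ : 0 < ρ) (hg : 0 < g)
    (hα : 0 < α) (hα' : α < π / 2) :
    (∀ x ∈ Set.Icc (0 : ℝ) 10,
      phiRigidity ρ g α x ≤ ρ * g * Real.sin α * 3 * 10 / (2 * Real.sqrt 2 * (3 - 1))) ∧
    phiRigidity ρ g α 0 = ρ * g * Real.sin α * 3 * 10 / (2 * Real.sqrt 2 * (3 - 1)) ∧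
    phiRigidity ρ g α 10 = ρ * g * Real.sin α * 3 * 10 / (2 * Real.sqrt 2 * (3 - 1)) ∧
    (ρ = 1 → g = 9.81 → α = π / 18 →
      |ρ * g * Real.sin α * 3 * 10 / (2 * Real.sqrt 2 * (3 - 1)) - 9.0341| < 0.001) := by
  have hπ : (0 : ℝ) < π := Real.pi_pos
  have hsα : 0 ≤ Real.sin α := Real.sin_nonneg_of_nonneg_of_le_pi hα.le (by linarith)
  have h2 : (0 : ℝ) < Real.sqrt 2 := Real.sqrt_pos.mpr (by norm_num)
  have h2sq : Real.sqrt 2 ^ 2 = 2 := Real.sq_sqrt (by norm_num)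
  have hC : 0 ≤ ρ * g * Real.sin α / Real.sqrt 2 := by positivity
  have hRHS : ρ * g * Real.sin α * 3 * 10 / (2 * Real.sqrt 2 * (3 - 1)) =
      (ρ * g * Real.sin α / Real.sqrt 2) * (15 / 2) := by
    field_simp
    ring
  refine ⟨?_, ?_, ?_, ?_⟩
  · intro x hx
    obtain ⟨hx0, hx1⟩ := hx
    rw [hRHS]
    unfold phiRigidity
    have hd : (0 : ℝ) < 3 - Real.cos (π * x) := by
      nlinarith [Real.cos_le_one (π * x), Real.neg_one_le_cos (π * x)]
    rw [div_le_iff₀ hd]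
    have hkey := key_ineq x hx0 hx1
    nlinarith [mul_le_mul_of_nonneg_left hkey hC,
      abs_nonneg (3 * (x - 10 / 2) - (Real.sin (π * x) - Real.sin (π * 10)) / π)]
  · rw [hRHS]
    unfold phiRigidity
    rw [sin_pi_ten]
    norm_num
    ring
  · rw [hRHS]
    unfold phiRigidity
    rw [sin_pi_ten, cos_pi_ten]
    norm_num
    ring
  · rintro rfl rfl rfl
    obtain ⟨hsl, hsu⟩ := sin_pi_div_18_bounds
    obtain ⟨hql, hqu⟩ := sqrt_two_bounds
    rw [abs_sub_lt_iff]
    constructor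
    · rw [div_sub' (c := 2 * Real.sqrt 2 * (3 - 1)) (by positivity), div_lt_iff₀ (by positivity)]
      nlinarith
    · rw [sub_div' (c := 2 * Real.sqrt 2 * (3 - 1)) (by positivity), div_lt_iff₀ (by positivity)]
      nlinarith
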